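/- (Tangential approach of the MRPI barrier of the imperfect SEIR model.) Let 0 < β_min ≤ β_max, 0 < γ_min ≤ γ_max, η_max > 0 and 0 < I_max < 1. Suppose S, E, I : ℝ → ℝ are differentiable on a neighbourhood of t̄ and satisfy the closed-loop equations S' = −β̂(I) S I, E' = β̂(I) S I − η_max E, I' = η_max E − γ̂(I) I there, with I(t̄) = I_max, E(t̄) = (γ_max / η_max) I_max, and S(t̄) = z₁ where 0 ≤ z₁ and β_min z₁ < γ_max. Then there exists ε > 0 such that I(t) < I_max for all t ∈ (t̄ − ε, t̄); i.e. the barrier curve ending tangentially at such a point lies in the open region {I < I_max} immediately before the tangency time. -/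

import Mathlib

/-- The affine feedback `β̂(I) = β_min (I/I_max) + β_max (1 − I/I_max)`. -/
noncomputable def betaHat (βmin βmax Imax i : ℝ) : ℝ :=
  βmin * (i / Imax) + βmax * (1 - i / Imax)

/-- The affine feedback `γ̂(I) = γ_min (1 − I/I_max) + γ_max (I/I_max)`. -/
noncomputable def gammaHat (γmin γmax Imax i : ℝ) : ℝ :=
  γmin * (1 - i / Imax) + γmax * (i / Imax)

/-- Tangential approach of the MRPI barrier of the imperfect SEIR model:
a barrier curve of the closed-loop system (feedbacks `β̂`, `γ̂`, worst-case
parameter `η ≡ η_max`) ending tangentially at a point with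
`E(t̄) = (γ_max/η_max) I_max`, `I(t̄) = I_max`, `S(t̄) = z₁`, `0 ≤ z₁`,
`β_min z₁ < γ_max` satisfies `I(t) < I_max` immediately before the tangency time. -/
theorem seir_imperfect_mrpi_barrier_tangential_approach
    (βmin βmax γmin γmax ηmax Imax tbar z₁ : ℝ)
    (hβmin : 0 < βmin) (hβ : βmin ≤ βmax)
    (hγmin : 0 < γmin) (hγ : γmin ≤ γmax)
    (hηmax : 0 < ηmax) (hI0 : 0 < Imax) (hI1 : Imax < 1)
    (S E I : ℝ → ℝ)
    (hS : ∀ᶠ t in nhds tbar,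
      HasDerivAt S (-(betaHat βmin βmax Imax (I t) * S t * I t)) t)
    (hE : ∀ᶠ t in nhds tbar,
      HasDerivAt E (betaHat βmin βmax Imax (I t) * S t * I t - ηmax * E t) t)
    (hI : ∀ᶠ t in nhds tbar,
      HasDerivAt I (ηmax * E t - gammaHat γmin γmax Imax (I t) * I t) t)
    (hItan : I tbar = Imax) (hEtan : E tbar = (γmax / ηmax) * Imax)
    (hStan : S tbar = z₁) (hz₁0 : 0 ≤ z₁) (hz₁ : βmin * z₁ < γmax) :
    ∃ ε > 0, ∀ t ∈ Set.Ioo (tbar - ε) tbar, I t < Imax := by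
  have hIne : Imax ≠ 0 := ne_of_gt hI0
  have hηne : ηmax ≠ 0 := ne_of_gt hηmax
  set φ : ℝ → ℝ := fun t => ηmax * E t - gammaHat γmin γmax Imax (I t) * I t with hφdef
  -- φ tbar = 0
  have hφ0 : φ tbar = 0 := by
    simp only [hφdef, hItan, hEtan, gammaHat]
    field_simp
    ring
  have hI' : HasDerivAt I (φ tbar) tbar := hI.self_of_nhds
  have hE' : HasDerivAt E (betaHat βmin βmax Imax (I tbar) * S tbar * I tbar - ηmax * E tbar)
      tbar := hE.self_of_nhds
  -- derivative of φ at tbar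
  have hg : HasDerivAt (fun t => gammaHat γmin γmax Imax (I t))
      (γmin * (-(φ tbar / Imax)) + γmax * (φ tbar / Imax)) tbar := by
    simp only [gammaHat]
    exact (((hI'.div_const Imax).const_sub 1).const_mul γmin).add
      ((hI'.div_const Imax).const_mul γmax)
  have hprod : HasDerivAt (fun t => gammaHat γmin γmax Imax (I t) * I t)
      ((γmin * (-(φ tbar / Imax)) + γmax * (φ tbar / Imax)) * I tbar
        + gammaHat γmin γmax Imax (I tbar) * φ tbar) tbar := hg.mul hI'
  have hφ' : HasDerivAt φ
      (ηmax * (betaHat βmin βmax Imax (I tbar) * S tbar * I tbar - ηmax * E tbar)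
        - ((γmin * (-(φ tbar / Imax)) + γmax * (φ tbar / Imax)) * I tbar
          + gammaHat γmin γmax Imax (I tbar) * φ tbar)) tbar :=
    (hE'.const_mul ηmax).sub hprod
  -- the derivative value is negative
  have hc : (ηmax * (betaHat βmin βmax Imax (I tbar) * S tbar * I tbar - ηmax * E tbar)
        - ((γmin * (-(φ tbar / Imax)) + γmax * (φ tbar / Imax)) * I tbar
          + gammaHat γmin γmax Imax (I tbar) * φ tbar))
      = ηmax * (βmin * z₁ - γmax) * Imax := by
    rw [hφ0, hItan, hEtan, hStan]
    simp only [betaHat]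
    field_simp
    ring
  rw [hc] at hφ'
  have hcneg : ηmax * (βmin * z₁ - γmax) * Imax < 0 := by nlinarith [mul_neg_of_pos_of_neg (mul_pos hηmax hI0) (show βmin * z₁ - γmax < 0 by linarith)]
  -- slope of φ eventually negative, so φ > 0 on a left interval
  have hslope := hasDerivAt_iff_tendsto_slope.mp hφ'
  have hev1 : ∀ᶠ t in nhdsWithin tbar {tbar}ᶜ, slope φ tbar t < 0 :=
    hslope.eventually_lt_const hcneg
  have hle : nhdsWithin tbar (Set.Iio tbar) ≤ nhdsWithin tbar {tbar}ᶜ :=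
    nhdsWithin_mono _ (fun x hx => ne_of_lt hx)
  have hev2 : ∀ᶠ t in nhdsWithin tbar (Set.Iio tbar),
      slope φ tbar t < 0 ∧ HasDerivAt I (φ t) t := by
    filter_upwards [hle hev1, nhdsWithin_le_nhds hI] with t h1 h2
    exact ⟨h1, h2⟩
  rcases mem_nhdsLT_iff_exists_Ioo_subset.mp hev2 with ⟨l, hl, hsub⟩
  have hltbar : l < tbar := hl
  refine ⟨tbar - l, by linarith, fun t ht => ?_⟩
  have htIoo : t ∈ Set.Ioo l tbar := by
    constructor
    · linarith [ht.1]
    · exact ht.2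
  -- φ > 0 on Ioo l tbar
  have hφpos : ∀ x ∈ Set.Ioo l tbar, 0 < φ x := by
    intro x hx
    have h := (hsub hx).1
    rw [slope_def_field, hφ0, sub_zero] at h
    rcases div_neg_iff.mp h with ⟨hp, _⟩ | ⟨_, hq⟩
    · exact hp
    · linarith [hx.2]
  -- I is strictly mono on [t, tbar]
  have hmono : StrictMonoOn I (Set.Icc t tbar) := by
    apply StrictMonoOn.mono (s := Set.Icc t tbar) ?_ (le_refl _)
    apply strictMonoOn_of_deriv_pos (convex_Icc t tbar)
    · intro x hx
      rcases eq_or_lt_of_le hx.2 with h | h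
      · exact (h ▸ hI'.continuousAt).continuousWithinAt
      · have : x ∈ Set.Ioo l tbar := ⟨lt_of_lt_of_le htIoo.1 hx.1, h⟩
        exact ((hsub this).2.continuousAt).continuousWithinAt
    · intro x hx
      rw [interior_Icc] at hx
      have hx' : x ∈ Set.Ioo l tbar := ⟨lt_trans htIoo.1 hx.1, hx.2⟩
      rw [(hsub hx').2.deriv]
      exact hφpos x hx'
  have := hmono (Set.left_mem_Icc.mpr (le_of_lt ht.2)) (Set.right_mem_Icc.mpr (le_of_lt ht.2)) ht.2
  rwa [hItan] at this
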